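/- Weak duality: let μ and ν be probability measures on ℝ with finite first moments, let K₂ < K₁ be reals, let π be a martingale coupling of μ and ν and B ⊆ ℝ a Borel set. Let φ, ψ : ℝ → ℝ be Borel functions with φ integrable with respect to μ and ψ integrable with respect to ν, and let θ₁, θ₂ : ℝ → ℝ be bounded Borel functions such that for all x, y ∈ ℝ: max(K₁ − x, 0) ≤ φ(x) + ψ(y) + θ₁(x)(y − x) and max(K₂ − y, 0) ≤ φ(x) + ψ(y) + θ₂(x)(y − x). Then the American-put payoff satisfies A(π,B) ≤ ∫ φ dμ + ∫ ψ dν. -/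

import Mathlib

open MeasureTheory Set

/-- The put price function `P_η(k) = ∫ (k-x)⁺ dη(x)`. -/
noncomputable def putPrice (η : Measure ℝ) (k : ℝ) : ℝ := ∫ x, max (k - x) 0 ∂η

/-- `π` is a martingale coupling of `μ` and `ν`. -/
def IsMartingaleCoupling (μ ν : Measure ℝ) (π : Measure (ℝ × ℝ)) : Prop :=
  IsProbabilityMeasure π ∧ π.map Prod.fst = μ ∧ π.map Prod.snd = ν ∧
    ∀ B : Set ℝ, MeasurableSet B →
      ∫ p in B ×ˢ (Set.univ : Set ℝ), p.2 ∂π = ∫ x in B, x ∂μ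

/-- The American-put payoff under coupling `π` and exercise set `B`. -/
noncomputable def amPayoff (K₁ K₂ : ℝ) (π : Measure (ℝ × ℝ)) (B : Set ℝ) : ℝ :=
  ∫ p, (B.indicator (fun x => max (K₁ - x) 0) p.1
      + Bᶜ.indicator (fun _ => max (K₂ - p.2) 0) p.1) ∂π

/-- The sub-σ-algebra generated by the first coordinate. -/
@[reducible] def mFst : MeasurableSpace (ℝ × ℝ) :=
  MeasurableSpace.comap (Prod.fst : ℝ × ℝ → ℝ) Real.measurableSpace

/-- For a martingale coupling, `∫ θ(x)(y - x) dπ = 0` for bounded measurable `θ`. -/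
theorem martingale_coupling_integral_zero
    (μ ν : Measure ℝ) (π : Measure (ℝ × ℝ)) (hπ : IsMartingaleCoupling μ ν π)
    (hμint : Integrable (fun x => x) μ) (hνint : Integrable (fun y => y) ν)
    (θ : ℝ → ℝ) (hθm : Measurable θ) (hθb : ∃ C : ℝ, ∀ x, |θ x| ≤ C) :
    ∫ p, θ p.1 * (p.2 - p.1) ∂π = 0 := by
  obtain ⟨hprob, hfst, hsnd, hmart⟩ := hπ
  haveI := hprob
  -- integrability of coordinates
  have h1int : Integrable (fun p : ℝ × ℝ => p.1) π := by
    have := hfst ▸ hμint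
    exact (integrable_map_measure this.aestronglyMeasurable measurable_fst.aemeasurable).mp this
  have h2int : Integrable (fun p : ℝ × ℝ => p.2) π := by
    have := hsnd ▸ hνint
    exact (integrable_map_measure this.aestronglyMeasurable measurable_snd.aemeasurable).mp this
  set f : ℝ × ℝ → ℝ := fun p => p.2 - p.1 with hf
  have hfi : Integrable f π := h2int.sub h1int
  have hm : mFst ≤ (Prod.instMeasurableSpace : MeasurableSpace (ℝ × ℝ)) := measurable_fst.comap_le
  haveI : SigmaFinite (π.trim hm) := by
    haveI : IsFiniteMeasure (π.trim hm) := MeasureTheory.isFiniteMeasure_trim hm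
    infer_instance
  -- conditional expectation of f is zero
  have hcond : (0 : (ℝ × ℝ) → ℝ) =ᵐ[π] π[f|mFst] := by
    refine ae_eq_condExp_of_forall_setIntegral_eq hm hfi
      (fun s _ _ => (integrable_zero _ _ _).integrableOn) (fun s hs _ => ?_)
      (StronglyMeasurable.aestronglyMeasurable stronglyMeasurable_zero)
    obtain ⟨B, hB, rfl⟩ := MeasurableSpace.measurableSet_comap.mp hs
    have hpre : Prod.fst ⁻¹' B = B ×ˢ (Set.univ : Set ℝ) := by
      ext p; simp [Set.mem_prod]
    have e2 : ∫ p in Prod.fst ⁻¹' B, p.2 ∂π = ∫ x in B, x ∂μ := by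
      rw [hpre]; exact hmart B hB
    have e1 : ∫ p in Prod.fst ⁻¹' B, p.1 ∂π = ∫ x in B, x ∂μ := by
      have := setIntegral_map (μ := π) (g := Prod.fst) (f := fun x : ℝ => x) hB
        (by rw [hfst]; exact hμint.aestronglyMeasurable) measurable_fst.aemeasurable
      rw [hfst] at this
      exact this.symm
    have : ∫ p in Prod.fst ⁻¹' B, f p ∂π
        = (∫ p in Prod.fst ⁻¹' B, p.2 ∂π) - ∫ p in Prod.fst ⁻¹' B, p.1 ∂π :=
      integral_sub h2int.integrableOn h1int.integrableOn
    simp [this, e1, e2]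
  -- pull-out property
  have hθsm : StronglyMeasurable[mFst] (fun p : ℝ × ℝ => θ p.1) := by
    have hfstm : Measurable[mFst] (Prod.fst : ℝ × ℝ → ℝ) :=
      Measurable.of_comap_le le_rfl
    exact (hθm.comp hfstm).stronglyMeasurable
  have hθf : Integrable (fun p : ℝ × ℝ => θ p.1 * f p) π := by
    obtain ⟨C, hC⟩ := hθb
    exact hfi.bdd_mul (c := C) ((hθm.comp measurable_fst).aestronglyMeasurable)
      (Filter.Eventually.of_forall fun p => by simpa using hC p.1)
  have hpull : π[(fun p : ℝ × ℝ => θ p.1) * f|mFst]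
      =ᵐ[π] (fun p : ℝ × ℝ => θ p.1) * π[f|mFst] :=
    condExp_mul_of_stronglyMeasurable_left hθsm hθf hfi
  calc ∫ p, θ p.1 * (p.2 - p.1) ∂π
      = ∫ p, ((fun p : ℝ × ℝ => θ p.1) * f) p ∂π := rfl
    _ = ∫ p, (π[(fun p : ℝ × ℝ => θ p.1) * f|mFst]) p ∂π := (integral_condExp hm).symm
    _ = ∫ p, ((fun p : ℝ × ℝ => θ p.1) * π[f|mFst]) p ∂π := integral_congr_ae hpull
    _ = ∫ p, ((fun p : ℝ × ℝ => θ p.1) * 0) p ∂π := by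
        refine integral_congr_ae ?_
        filter_upwards [hcond] with p hp
        simp [← hp]
    _ = 0 := by simp

/-- Weak duality: any superhedge dominates the model-based American-put payoff. -/
theorem american_put_weak_duality
    (μ ν : Measure ℝ) [IsProbabilityMeasure μ] [IsProbabilityMeasure ν]
    (hμint : Integrable (fun x => x) μ) (hνint : Integrable (fun y => y) ν)
    (K₁ K₂ : ℝ) (hK : K₂ < K₁)
    (π : Measure (ℝ × ℝ)) (hπ : IsMartingaleCoupling μ ν π)
    (B : Set ℝ) (hB : MeasurableSet B)
    (φ ψ : ℝ → ℝ) (hφm : Measurable φ) (hψm : Measurable ψ)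
    (hφint : Integrable φ μ) (hψint : Integrable ψ ν)
    (θ₁ θ₂ : ℝ → ℝ) (hθ₁m : Measurable θ₁) (hθ₂m : Measurable θ₂)
    (hθ₁b : ∃ C : ℝ, ∀ x, |θ₁ x| ≤ C) (hθ₂b : ∃ C : ℝ, ∀ x, |θ₂ x| ≤ C)
    (h1 : ∀ x y : ℝ, max (K₁ - x) 0 ≤ φ x + ψ y + θ₁ x * (y - x))
    (h2 : ∀ x y : ℝ, max (K₂ - y) 0 ≤ φ x + ψ y + θ₂ x * (y - x)) :
    amPayoff K₁ K₂ π B ≤ (∫ x, φ x ∂μ) + ∫ y, ψ y ∂ν := by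
  classical
  obtain ⟨hprob, hfst, hsnd, hmart⟩ := hπ
  haveI := hprob
  set θ : ℝ → ℝ := fun x => if x ∈ B then θ₁ x else θ₂ x with hθdef
  have hθm : Measurable θ := Measurable.ite hB hθ₁m hθ₂m
  have hθb : ∃ C : ℝ, ∀ x, |θ x| ≤ C := by
    obtain ⟨C₁, hC₁⟩ := hθ₁b; obtain ⟨C₂, hC₂⟩ := hθ₂b
    refine ⟨max C₁ C₂, fun x => ?_⟩
    by_cases hx : x ∈ B <;> simp only [hθdef, hx, if_true, if_false]
    · exact le_trans (hC₁ x) (le_max_left _ _)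
    · exact le_trans (hC₂ x) (le_max_right _ _)
  -- integrability pieces
  have hφπ : Integrable (fun p : ℝ × ℝ => φ p.1) π := by
    have := hfst ▸ hφint
    exact (integrable_map_measure this.aestronglyMeasurable measurable_fst.aemeasurable).mp this
  have hψπ : Integrable (fun p : ℝ × ℝ => ψ p.2) π := by
    have := hsnd ▸ hψint
    exact (integrable_map_measure this.aestronglyMeasurable measurable_snd.aemeasurable).mp this
  have h1int : Integrable (fun p : ℝ × ℝ => p.1) π := by
    have := hfst ▸ hμint
    exact (integrable_map_measure this.aestronglyMeasurable measurable_fst.aemeasurable).mp this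
  have h2int : Integrable (fun p : ℝ × ℝ => p.2) π := by
    have := hsnd ▸ hνint
    exact (integrable_map_measure this.aestronglyMeasurable measurable_snd.aemeasurable).mp this
  have hθπ : Integrable (fun p : ℝ × ℝ => θ p.1 * (p.2 - p.1)) π := by
    obtain ⟨C, hC⟩ := hθb
    exact (h2int.sub h1int).bdd_mul (c := C) ((hθm.comp measurable_fst).aestronglyMeasurable)
      (Filter.Eventually.of_forall fun p => by simpa using hC p.1)
  set G : ℝ × ℝ → ℝ := fun p => φ p.1 + ψ p.2 + θ p.1 * (p.2 - p.1) with hGdef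
  have hGint : Integrable G π := (hφπ.add hψπ).add hθπ
  -- pointwise bound
  have hFG : ∀ p : ℝ × ℝ,
      B.indicator (fun x => max (K₁ - x) 0) p.1
        + Bᶜ.indicator (fun _ => max (K₂ - p.2) 0) p.1 ≤ G p := by
    intro p
    by_cases hp : p.1 ∈ B
    · simp only [Set.indicator_of_mem hp, Set.indicator_of_notMem (by simpa using hp : p.1 ∉ Bᶜ),
        add_zero, hGdef, hθdef, if_pos hp]
      exact h1 p.1 p.2
    · simp only [Set.indicator_of_notMem hp, Set.indicator_of_mem (by simpa using hp : p.1 ∈ Bᶜ),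
        zero_add, hGdef, hθdef, if_neg hp]
      exact h2 p.1 p.2
  have hF0 : ∀ p : ℝ × ℝ,
      (0:ℝ) ≤ B.indicator (fun x => max (K₁ - x) 0) p.1
        + Bᶜ.indicator (fun _ => max (K₂ - p.2) 0) p.1 := by
    intro p
    have a : (0:ℝ) ≤ B.indicator (fun x => max (K₁ - x) 0) p.1 :=
      Set.indicator_nonneg (fun x _ => le_max_right _ _) _
    have b : (0:ℝ) ≤ Bᶜ.indicator (fun _ => max (K₂ - p.2) 0) p.1 :=
      Set.indicator_nonneg (fun x _ => le_max_right _ _) _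
    linarith
  have key : amPayoff K₁ K₂ π B ≤ ∫ p, G p ∂π := by
    unfold amPayoff
    exact integral_mono_of_nonneg (Filter.Eventually.of_forall hF0) hGint
      (Filter.Eventually.of_forall hFG)
  have hzero : ∫ p, θ p.1 * (p.2 - p.1) ∂π = 0 :=
    martingale_coupling_integral_zero μ ν π ⟨hprob, hfst, hsnd, hmart⟩ hμint hνint θ hθm hθb
  have hsplit : ∫ p, G p ∂π = (∫ x, φ x ∂μ) + ∫ y, ψ y ∂ν := by
    have e1 : ∫ p, G p ∂π
        = (∫ p, (φ p.1 + ψ p.2) ∂π) + ∫ p, θ p.1 * (p.2 - p.1) ∂π :=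
      integral_add (hφπ.add hψπ) hθπ
    have e2 : ∫ p, (φ p.1 + ψ p.2) ∂π = (∫ p, φ p.1 ∂π) + ∫ p, ψ p.2 ∂π :=
      integral_add hφπ hψπ
    rw [e1, e2, hzero, add_zero]
    congr 1
    · rw [← hfst, integral_map measurable_fst.aemeasurable hφm.aestronglyMeasurable]
    · rw [← hsnd, integral_map measurable_snd.aemeasurable hψm.aestronglyMeasurable]
  exact hsplit ▸ key
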